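/- (Energy conservation of CNFP) Let 0 < ε ≤ 1, τ > 0, and let V_j, A_{1,j} ∈ ℝ (j = 0,…,N) be time-independent. Suppose the sequence of periodic grid functions Φⁿ (n ≥ 0) satisfies the CNFP scheme: iδ⁺_tΦⁿ_j = −iσ₁ (D^f_x Φ^{n+1/2})_j + σ₃ Φ^{n+1/2}_j + ε(V_j I₂ − A_{1,j}σ₁)Φ^{n+1/2}_j for all j = 0,…,N−1 and n ≥ 0. Then the discrete energy ℰ^n_h = h ∑_{j=0}^{N−1} [ −i (Φⁿ_j)* σ₁ (D^f_x Φⁿ)_j + (Φⁿ_j)* σ₃ Φⁿ_j + ε V_j |Φⁿ_j|² − ε A_{1,j} (Φⁿ_j)* σ₁ Φⁿ_j ] satisfies ℰ^n_h = ℰ^0_h for all n ≥ 0. -/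

import Mathlib

open Complex Matrix Finset

noncomputable section

/-- The Pauli matrix σ₁. -/
def σ1 : Matrix (Fin 2) (Fin 2) ℂ := !![0, 1; 1, 0]

/-- The Pauli matrix σ₃. -/
def σ3 : Matrix (Fin 2) (Fin 2) ℂ := !![1, 0; 0, -1]

/-- The index set 𝒯_N = {−N/2, …, N/2−1}. -/
def TN (N : ℕ) : Finset ℤ := Finset.Icc (-(N : ℤ) / 2) ((N : ℤ) / 2 - 1)

/-- The Fourier frequency μ_l = 2πl/(b−a); `bma` stands for b−a. -/
def μ (bma : ℝ) (l : ℤ) : ℝ := 2 * Real.pi * l / bma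

/-- The Fourier pseudospectral derivative of a periodic grid function:
(D^f_x U)_j = (i/N) ∑_{k=0}^{N−1} ∑_{l∈𝒯_N} μ_l e^{2i(j−k)lπ/N} U_k. -/
def Dfx (N : ℕ) (bma : ℝ) (U : ℤ → Fin 2 → ℂ) (j : ℤ) : Fin 2 → ℂ :=
  (Complex.I / (N : ℂ)) • ∑ k ∈ Finset.range N, ∑ l ∈ TN N,
    ((μ bma l : ℝ) : ℂ) •
      (Complex.exp (2 * Complex.I * ((j : ℂ) - (k : ℂ)) * (l : ℂ) * (Real.pi : ℂ) / (N : ℂ)) •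
        U (k : ℤ))

/-- The time average Φ^{n+1/2}. -/
def mid (Φ : ℕ → ℤ → Fin 2 → ℂ) (n : ℕ) (j : ℤ) : Fin 2 → ℂ :=
  (2 : ℂ)⁻¹ • (Φ (n + 1) j + Φ n j)

/-- The discrete CNFP energy ℰⁿ_h. -/
def Ehp (h ε : ℝ) (N : ℕ) (bma : ℝ) (V A : ℤ → ℝ) (Φ : ℕ → ℤ → Fin 2 → ℂ) (n : ℕ) : ℂ :=
  (h : ℂ) * ∑ j ∈ Finset.range N,
    ((-Complex.I) * (star (Φ n (j : ℤ)) ⬝ᵥ σ1.mulVec (Dfx N bma (Φ n) (j : ℤ))) +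
      star (Φ n (j : ℤ)) ⬝ᵥ σ3.mulVec (Φ n (j : ℤ)) +
      ((ε * V (j : ℤ) : ℝ) : ℂ) * ((∑ i, ‖Φ n (j : ℤ) i‖ ^ 2 : ℝ) : ℂ) -
      ((ε * A (j : ℤ) : ℝ) : ℂ) * (star (Φ n (j : ℤ)) ⬝ᵥ σ1.mulVec (Φ n (j : ℤ))))



lemma dot1 (u w : Fin 2 → ℂ) :
    star u ⬝ᵥ σ1.mulVec w = (starRingEnd ℂ) (u 0) * w 1 + (starRingEnd ℂ) (u 1) * w 0 := by
  simp [dotProduct, Matrix.mulVec, σ1, Fin.sum_univ_two]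

lemma dot3 (u w : Fin 2 → ℂ) :
    star u ⬝ᵥ σ3.mulVec w = (starRingEnd ℂ) (u 0) * w 0 - (starRingEnd ℂ) (u 1) * w 1 := by
  simp [dotProduct, Matrix.mulVec, σ3, Fin.sum_univ_two]; ring

lemma dot0 (u w : Fin 2 → ℂ) :
    star u ⬝ᵥ w = (starRingEnd ℂ) (u 0) * w 0 + (starRingEnd ℂ) (u 1) * w 1 := by
  simp [dotProduct, Fin.sum_univ_two]

lemma normsum (u : Fin 2 → ℂ) :
    ((∑ i, ‖u i‖ ^ 2 : ℝ) : ℂ) = star u ⬝ᵥ u := by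
  rw [dot0, Fin.sum_univ_two, RCLike.conj_mul, RCLike.conj_mul]
  norm_cast

/-- coefficient -/
def cf (N : ℕ) (bma : ℝ) (j k : ℤ) (l : ℤ) : ℂ :=
  (Complex.I / (N : ℂ)) * (((μ bma l : ℝ) : ℂ) *
    Complex.exp (2 * Complex.I * ((j : ℂ) - (k : ℂ)) * (l : ℂ) * (Real.pi : ℂ) / (N : ℂ)))

lemma Dfx_comp (N : ℕ) (bma : ℝ) (U : ℤ → Fin 2 → ℂ) (j : ℤ) (i : Fin 2) :
    Dfx N bma U j i = ∑ k ∈ Finset.range N, ∑ l ∈ TN N, cf N bma j k l * U (k : ℤ) i := by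
  simp [Dfx, Finset.smul_sum, smul_smul, cf, mul_assoc, Finset.mul_sum]

lemma cf_conj (N : ℕ) (bma : ℝ) (j k l : ℤ) :
    (starRingEnd ℂ) (cf N bma k j l) = - cf N bma j k l := by
  simp only [cf, _root_.map_mul, map_div₀, Complex.conj_I, map_natCast, Complex.conj_ofReal,
    ← Complex.exp_conj, map_sub, map_intCast, map_ofNat]
  rw [show 2 * -Complex.I * ((k:ℂ) - (j:ℂ)) * (l:ℂ) * (Real.pi:ℂ) / (N:ℂ)
      = 2 * Complex.I * ((j:ℂ) - (k:ℂ)) * (l:ℂ) * (Real.pi:ℂ) / (N:ℂ) by ring]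
  ring

lemma herm_dfx (N : ℕ) (bma : ℝ) (u v : ℤ → Fin 2 → ℂ) :
    ∑ j ∈ Finset.range N, (-Complex.I) * (star (u (j:ℤ)) ⬝ᵥ σ1.mulVec (Dfx N bma v (j:ℤ)))
    = (starRingEnd ℂ) (∑ j ∈ Finset.range N,
        (-Complex.I) * (star (v (j:ℤ)) ⬝ᵥ σ1.mulVec (Dfx N bma u (j:ℤ)))) := by
  have expand : ∀ u v : ℤ → Fin 2 → ℂ,
      ∑ j ∈ Finset.range N, (-Complex.I) * (star (u (j:ℤ)) ⬝ᵥ σ1.mulVec (Dfx N bma v (j:ℤ)))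
      = ∑ j ∈ Finset.range N, ∑ k ∈ Finset.range N, ∑ l ∈ TN N,
          (-Complex.I) * cf N bma (j:ℤ) (k:ℤ) l *
            ((starRingEnd ℂ) (u (j:ℤ) 0) * v (k:ℤ) 1 +
              (starRingEnd ℂ) (u (j:ℤ) 1) * v (k:ℤ) 0) := by
    intro u v
    refine Finset.sum_congr rfl fun j _ => ?_
    rw [dot1, Dfx_comp, Dfx_comp]
    simp only [mul_add, Finset.mul_sum, ← Finset.sum_add_distrib]
    refine Finset.sum_congr rfl fun k _ => Finset.sum_congr rfl fun l _ => ?_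
    ring
  rw [expand, expand, map_sum, Finset.sum_comm]
  refine Finset.sum_congr rfl fun k _ => ?_
  rw [map_sum]
  refine Finset.sum_congr rfl fun j _ => ?_
  rw [map_sum]
  refine Finset.sum_congr rfl fun l _ => ?_
  simp only [_root_.map_mul, map_add, map_neg, Complex.conj_I, Complex.conj_conj, cf_conj]
  ring

lemma Dfx_comp_sub (N : ℕ) (bma : ℝ) (u v : ℤ → Fin 2 → ℂ) (j : ℤ) (i : Fin 2) :
    Dfx N bma (fun k => u k - v k) j i = Dfx N bma u j i - Dfx N bma v j i := by
  simp [Dfx_comp, mul_sub, Finset.sum_sub_distrib]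

lemma Dfx_comp_half (N : ℕ) (bma : ℝ) (u v : ℤ → Fin 2 → ℂ) (j : ℤ) (i : Fin 2) :
    Dfx N bma (fun k => (2:ℂ)⁻¹ • (u k + v k)) j i
      = (2:ℂ)⁻¹ * (Dfx N bma u j i + Dfx N bma v j i) := by
  simp only [Dfx_comp, Pi.smul_apply, Pi.add_apply, smul_eq_mul, mul_add, Finset.mul_sum,
    ← Finset.sum_add_distrib]
  exact Finset.sum_congr rfl fun k _ => Finset.sum_congr rfl fun l _ => by ring

def Sd (ε : ℝ) (N : ℕ) (bma : ℝ) (V A : ℤ → ℝ) (u v : ℤ → Fin 2 → ℂ) (j : ℤ) : ℂ :=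
  (-Complex.I) * (star (u j) ⬝ᵥ σ1.mulVec (Dfx N bma v j)) +
    star (u j) ⬝ᵥ σ3.mulVec (v j) +
    ((ε * V j : ℝ) : ℂ) * (star (u j) ⬝ᵥ v j) -
    ((ε * A j : ℝ) : ℂ) * (star (u j) ⬝ᵥ σ1.mulVec (v j))

lemma Sd_herm (ε : ℝ) (N : ℕ) (bma : ℝ) (V A : ℤ → ℝ) (u v : ℤ → Fin 2 → ℂ) :
    ∑ j ∈ Finset.range N, Sd ε N bma V A u v (j:ℤ)
      = (starRingEnd ℂ) (∑ j ∈ Finset.range N, Sd ε N bma V A v u (j:ℤ)) := by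
  have split : ∀ u v : ℤ → Fin 2 → ℂ,
      ∑ j ∈ Finset.range N, Sd ε N bma V A u v (j:ℤ)
      = ((∑ j ∈ Finset.range N, (-Complex.I) * (star (u (j:ℤ)) ⬝ᵥ σ1.mulVec (Dfx N bma v (j:ℤ))))
        + ∑ j ∈ Finset.range N, star (u (j:ℤ)) ⬝ᵥ σ3.mulVec (v (j:ℤ))
        + ∑ j ∈ Finset.range N, ((ε * V (j:ℤ) : ℝ) : ℂ) * (star (u (j:ℤ)) ⬝ᵥ v (j:ℤ)))
        - ∑ j ∈ Finset.range N, ((ε * A (j:ℤ) : ℝ) : ℂ) * (star (u (j:ℤ)) ⬝ᵥ σ1.mulVec (v (j:ℤ))) := by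
    intro u v
    simp only [Sd, Finset.sum_sub_distrib, Finset.sum_add_distrib]
  have e2 : ∑ j ∈ Finset.range N, star (u (j:ℤ)) ⬝ᵥ σ3.mulVec (v (j:ℤ))
      = (starRingEnd ℂ) (∑ j ∈ Finset.range N, star (v (j:ℤ)) ⬝ᵥ σ3.mulVec (u (j:ℤ))) := by
    rw [map_sum]
    refine Finset.sum_congr rfl fun j _ => ?_
    rw [dot3, dot3]
    simp only [map_sub, _root_.map_mul, Complex.conj_conj]
    ring
  have e3 : ∑ j ∈ Finset.range N, ((ε * V (j:ℤ) : ℝ) : ℂ) * (star (u (j:ℤ)) ⬝ᵥ v (j:ℤ))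
      = (starRingEnd ℂ) (∑ j ∈ Finset.range N,
          ((ε * V (j:ℤ) : ℝ) : ℂ) * (star (v (j:ℤ)) ⬝ᵥ u (j:ℤ))) := by
    rw [map_sum]
    refine Finset.sum_congr rfl fun j _ => ?_
    rw [dot0, dot0]
    simp only [map_add, _root_.map_mul, Complex.conj_conj, Complex.conj_ofReal]
    ring
  have e4 : ∑ j ∈ Finset.range N, ((ε * A (j:ℤ) : ℝ) : ℂ) * (star (u (j:ℤ)) ⬝ᵥ σ1.mulVec (v (j:ℤ)))
      = (starRingEnd ℂ) (∑ j ∈ Finset.range N,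
          ((ε * A (j:ℤ) : ℝ) : ℂ) * (star (v (j:ℤ)) ⬝ᵥ σ1.mulVec (u (j:ℤ)))) := by
    rw [map_sum]
    refine Finset.sum_congr rfl fun j _ => ?_
    rw [dot1, dot1]
    simp only [map_add, _root_.map_mul, Complex.conj_conj, Complex.conj_ofReal]
    ring
  rw [split u v, split v u, herm_dfx, e2, e3, e4, ← map_add, ← map_add, ← map_sub]

lemma s1v0 (w : Fin 2 → ℂ) : σ1.mulVec w 0 = w 1 := by simp [Matrix.mulVec, σ1, dotProduct, Fin.sum_univ_two]
lemma s1v1 (w : Fin 2 → ℂ) : σ1.mulVec w 1 = w 0 := by simp [Matrix.mulVec, σ1, dotProduct, Fin.sum_univ_two]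
lemma s3v0 (w : Fin 2 → ℂ) : σ3.mulVec w 0 = w 0 := by simp [Matrix.mulVec, σ3, dotProduct, Fin.sum_univ_two]
lemma s3v1 (w : Fin 2 → ℂ) : σ3.mulVec w 1 = -w 1 := by simp [Matrix.mulVec, σ3, dotProduct, Fin.sum_univ_two]

lemma Sd_key (ε : ℝ) (N : ℕ) (bma : ℝ) (V A : ℤ → ℝ) (u v : ℤ → Fin 2 → ℂ) (j : ℤ) :
    Sd ε N bma V A u u j - Sd ε N bma V A v v j
    = Sd ε N bma V A (fun k => u k - v k) (fun k => (2:ℂ)⁻¹ • (u k + v k)) j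
      + Sd ε N bma V A (fun k => (2:ℂ)⁻¹ • (u k + v k)) (fun k => u k - v k) j := by
  simp only [Sd, dot0, s1v0, s1v1, s3v0, s3v1, Dfx_comp_sub, Dfx_comp_half, Pi.smul_apply,
    Pi.add_apply, Pi.sub_apply, smul_eq_mul, map_sub, map_add, _root_.map_mul, map_inv₀,
    map_ofNat, Complex.conj_conj, map_neg]
  ring

/-- Energy conservation of the Crank–Nicolson Fourier pseudospectral (CNFP)
method for the 1D Dirac equation with time-independent potentials. -/
theorem cnfp_energy_conservation (a b : ℝ) (hab : a < b) (N : ℕ) (hN : 0 < N)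
    (hNe : Even N) (h : ℝ) (hh : h = (b - a) / N)
    (τ ε : ℝ) (hτ : 0 < τ) (hε0 : 0 < ε) (hε1 : ε ≤ 1)
    (V A : ℤ → ℝ)
    (hVper : ∀ j : ℤ, V (j + N) = V j) (hAper : ∀ j : ℤ, A (j + N) = A j)
    (Φ : ℕ → ℤ → Fin 2 → ℂ)
    (hper : ∀ n : ℕ, ∀ j : ℤ, Φ n (j + N) = Φ n j)
    (hscheme : ∀ n : ℕ, ∀ j : ℤ,
      Complex.I • ((τ : ℂ)⁻¹ • (Φ (n + 1) j - Φ n j)) =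
        (-Complex.I) • σ1.mulVec (Dfx N (b - a) (mid Φ n) j) + σ3.mulVec (mid Φ n j) +
          (ε : ℂ) • (((V j : ℝ) : ℂ) • mid Φ n j -
            ((A j : ℝ) : ℂ) • σ1.mulVec (mid Φ n j))) :
    ∀ n : ℕ, Ehp h ε N (b - a) V A Φ n = Ehp h ε N (b - a) V A Φ 0 := by
  have EB : ∀ p : ℕ, Ehp h ε N (b - a) V A Φ p
      = (h:ℂ) * ∑ j ∈ Finset.range N, Sd ε N (b - a) V A (Φ p) (Φ p) (j:ℤ) := by
    intro p
    unfold Ehp Sd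
    congr 1
    refine Finset.sum_congr rfl fun j _ => ?_
    rw [normsum]
  have step : ∀ n : ℕ, Ehp h ε N (b - a) V A Φ (n + 1) = Ehp h ε N (b - a) V A Φ n := by
    intro n
    have hmid : mid Φ n = fun k => (2:ℂ)⁻¹ • (Φ (n + 1) k + Φ n k) := rfl
    have pair : ∀ j : ℤ,
        Sd ε N (b - a) V A (fun k => Φ (n + 1) k - Φ n k) (mid Φ n) j
          = Complex.I * (τ:ℂ)⁻¹ *
            (star (Φ (n + 1) j - Φ n j) ⬝ᵥ (Φ (n + 1) j - Φ n j)) := by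
      intro j
      have hs := hscheme n j
      have e1 : Sd ε N (b - a) V A (fun k => Φ (n + 1) k - Φ n k) (mid Φ n) j
          = star (Φ (n + 1) j - Φ n j) ⬝ᵥ
              ((-Complex.I) • σ1.mulVec (Dfx N (b - a) (mid Φ n) j) + σ3.mulVec (mid Φ n j) +
                (ε : ℂ) • (((V j : ℝ) : ℂ) • mid Φ n j -
                  ((A j : ℝ) : ℂ) • σ1.mulVec (mid Φ n j))) := by
        simp only [Sd, dot0, s1v0, s1v1, s3v0, s3v1, Pi.add_apply, Pi.smul_apply, Pi.sub_apply,
          smul_eq_mul, map_sub, map_add, Pi.neg_apply]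
        push_cast
        ring
      rw [e1, ← hs]
      simp only [dot0, Pi.smul_apply, Pi.sub_apply, smul_eq_mul, map_sub]
      ring
    have selfc : (starRingEnd ℂ) (∑ j ∈ Finset.range N,
        Sd ε N (b - a) V A (fun k => Φ (n + 1) k - Φ n k) (mid Φ n) (j:ℤ))
        = - ∑ j ∈ Finset.range N,
            Sd ε N (b - a) V A (fun k => Φ (n + 1) k - Φ n k) (mid Φ n) (j:ℤ) := by
      rw [map_sum, ← Finset.sum_neg_distrib]
      refine Finset.sum_congr rfl fun j _ => ?_
      rw [pair]
      simp only [_root_.map_mul, map_inv₀, Complex.conj_I, Complex.conj_ofReal, dot0, map_add,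
        _root_.map_mul, Complex.conj_conj, Pi.sub_apply, map_sub]
      ring
    have hz : (∑ j ∈ Finset.range N, Sd ε N (b - a) V A (Φ (n+1)) (Φ (n+1)) (j:ℤ))
        - ∑ j ∈ Finset.range N, Sd ε N (b - a) V A (Φ n) (Φ n) (j:ℤ) = 0 := by
      rw [← Finset.sum_sub_distrib]
      calc ∑ j ∈ Finset.range N,
            (Sd ε N (b - a) V A (Φ (n+1)) (Φ (n+1)) (j:ℤ) - Sd ε N (b - a) V A (Φ n) (Φ n) (j:ℤ))
          = ∑ j ∈ Finset.range N,
            (Sd ε N (b - a) V A (fun k => Φ (n+1) k - Φ n k)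
                (fun k => (2:ℂ)⁻¹ • (Φ (n+1) k + Φ n k)) (j:ℤ)
              + Sd ε N (b - a) V A (fun k => (2:ℂ)⁻¹ • (Φ (n+1) k + Φ n k))
                (fun k => Φ (n+1) k - Φ n k) (j:ℤ)) :=
            Finset.sum_congr rfl fun j _ => Sd_key ε N (b - a) V A (Φ (n+1)) (Φ n) (j:ℤ)
        _ = (∑ j ∈ Finset.range N, Sd ε N (b - a) V A (fun k => Φ (n+1) k - Φ n k)
                (fun k => (2:ℂ)⁻¹ • (Φ (n+1) k + Φ n k)) (j:ℤ))
            + ∑ j ∈ Finset.range N, Sd ε N (b - a) V A (fun k => (2:ℂ)⁻¹ • (Φ (n+1) k + Φ n k))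
                (fun k => Φ (n+1) k - Φ n k) (j:ℤ) := Finset.sum_add_distrib
        _ = 0 := by
            rw [← hmid, Sd_herm ε N (b - a) V A (mid Φ n) (fun k => Φ (n+1) k - Φ n k), selfc]
            ring
    rw [EB (n+1), EB n, sub_eq_zero.mp hz]
  intro n
  induction n with
  | zero => rfl
  | succ k ih => rw [step k]; exact ih


end
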